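/- Let (V,K,*,f) be an orthomodular Hermitian space and let [x], [y] be mutually orthogonal atoms (lines). If there exist nonzero x' ∈ [x], y' ∈ [y] with f(x',x') = f(y',y'), then there is an orthosymmetry ℓ₀ of the atoms with ℓ₀([x]) = [y], ℓ₀([y]) = [x], and ℓ₀([v]) = [v] for the line [v] spanned by v = x' + y'. -/

import Mathlib

/-- The orthogonal companion `M⊥ = {v | f(v,x) = 0 for all x ∈ M}`. -/
def perpSet {K V : Type*} [DivisionRing K] [AddCommGroup V] [Module K V]
    (f : V → V → K) (M : Set V) : Set V :=
  {v | ∀ x ∈ M, f v x = 0}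

/-- The line `[v] = Kv` through a vector `v`. -/
def lineOf (K : Type*) {V : Type*} [DivisionRing K] [AddCommGroup V] [Module K V]
    (v : V) : Set V :=
  Set.range fun c : K => c • v

/-- `L` is a line (an atom of `L_f(V)`). -/
def IsLine (K : Type*) {V : Type*} [DivisionRing K] [AddCommGroup V] [Module K V]
    (L : Set V) : Prop :=
  ∃ v : V, v ≠ 0 ∧ L = lineOf K v

/-- Orthogonality of two sets of vectors with respect to the form `f`. -/
def perpL {K V : Type*} [DivisionRing K] [AddCommGroup V] [Module K V]
    (f : V → V → K) (L L' : Set V) : Prop :=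
  ∀ x ∈ L, ∀ y ∈ L', f x y = 0

/-- Auxiliary: the coefficient of the swap map. -/
noncomputable def tAux {K V : Type*} [DivisionRing K] [AddCommGroup V] [Module K V]
    (f : V → V → K) (x' y' : V) (v : V) : K :=
  (f v y' - f v x') * (f x' x')⁻¹

/-- Auxiliary: the swap map exchanging `x'` and `y'` and fixing their common perp. -/
noncomputable def gAux {K V : Type*} [DivisionRing K] [AddCommGroup V] [Module K V]
    (f : V → V → K) (x' y' : V) (v : V) : V :=
  v + tAux f x' y' v • (x' - y')

lemma lineOf_smul {K V : Type*} [DivisionRing K] [AddCommGroup V] [Module K V]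
    (c : K) (v : V) (hc : c ≠ 0) : lineOf K (c • v) = lineOf K v := by
  ext w
  simp only [lineOf, Set.mem_range]
  constructor
  · rintro ⟨a, rfl⟩
    exact ⟨a * c, by rw [mul_smul]⟩
  · rintro ⟨a, rfl⟩
    exact ⟨a * c⁻¹, by rw [smul_smul, mul_assoc, inv_mul_cancel₀ hc, mul_one]⟩

theorem stmt_14 {K V : Type*} [DivisionRing K] [StarRing K]
    [AddCommGroup V] [Module K V]
    (f : V → V → K)
    (hadd : ∀ u v w : V, f (u + v) w = f u w + f v w)
    (hsmul : ∀ (c : K) (u v : V), f (c • u) v = c * f u v)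
    (hherm : ∀ u v : V, star (f u v) = f v u)
    (hdefinite : ∀ v : V, f v v = 0 → v = 0)
    (horthomodular : ∀ M : Set V, perpSet f (perpSet f M) = M →
      ∀ v : V, ∃ m ∈ M, ∃ p ∈ perpSet f M, v = m + p)
    (x y x' y' : V) (hx : x ≠ 0) (hy : y ≠ 0)
    (hxy : perpL f (lineOf K x) (lineOf K y))
    (hx' : x' ∈ lineOf K x) (hx'0 : x' ≠ 0)
    (hy' : y' ∈ lineOf K y) (hy'0 : y' ≠ 0)
    (hnorm : f x' x' = f y' y') :
    ∃ ℓ₀ : {L : Set V // IsLine K L} ≃ {L : Set V // IsLine K L},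
      (∀ L L' : {L : Set V // IsLine K L},
        perpL f L.1 L'.1 ↔ perpL f (ℓ₀ L).1 (ℓ₀ L').1) ∧
      (∀ L : {L : Set V // IsLine K L}, L.1 = lineOf K x → (ℓ₀ L).1 = lineOf K y) ∧
      (∀ L : {L : Set V // IsLine K L}, L.1 = lineOf K y → (ℓ₀ L).1 = lineOf K x) ∧
      (∀ L : {L : Set V // IsLine K L}, L.1 = lineOf K (x' + y') → ℓ₀ L = L) := by
  classical
  -- second-slot (semi)linearity
  have hsymm : ∀ u v : V, f u v = star (f v u) := fun u v => (hherm v u).symm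
  have haddr : ∀ u v w : V, f u (v + w) = f u v + f u w := by
    intro u v w
    rw [hsymm u (v + w), hadd, star_add, ← hsymm, ← hsymm]
  have hsmulr : ∀ (c : K) (u v : V), f u (c • v) = f u v * star c := by
    intro c u v
    rw [hsymm u (c • v), hsmul, star_mul, ← hsymm]
  have hnegr : ∀ u v : V, f u (-v) = - f u v := by
    intro u v
    have h := hsmulr (-1) u v
    simpa using h
  have hsubr : ∀ u v w : V, f u (v - w) = f u v - f u w := by
    intro u v w
    rw [sub_eq_add_neg, haddr, hnegr, sub_eq_add_neg]
  have hneg : ∀ u v : V, f (-u) v = - f u v := by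
    intro u v
    have h := hsmul (-1) u v
    simpa using h
  have hsub : ∀ u v w : V, f (u - v) w = f u w - f v w := by
    intro u v w
    rw [sub_eq_add_neg, hadd, hneg, sub_eq_add_neg]
  have hf0 : ∀ v : V, f 0 v = 0 := by
    intro v
    have h := hadd 0 0 v
    rw [add_zero] at h
    exact (right_eq_add.mp h)
  -- notation
  set N := f x' x' with hNdef
  have hN : N ≠ 0 := fun h => hx'0 (hdefinite x' h)
  have hxy' : f x' y' = 0 := hxy x' hx' y' hy'
  have hyx' : f y' x' = 0 := by rw [← hherm, hxy', star_zero]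
  have hy'y' : f y' y' = N := hnorm.symm
  set d := x' - y' with hd
  set t := tAux f x' y' with htdef
  set g := gAux f x' y' with hgdef
  have htv : ∀ v, t v = (f v y' - f v x') * N⁻¹ := fun v => rfl
  have hgv : ∀ v, g v = v + t v • d := fun v => rfl
  -- linearity of t and g
  have ht_add : ∀ u v, t (u + v) = t u + t v := by
    intro u v
    rw [htv, htv, htv, hadd, hadd]
    noncomm_ring
  have ht_smul : ∀ (c : K) v, t (c • v) = c * t v := by
    intro c v
    rw [htv, htv, hsmul, hsmul]
    noncomm_ring
  have ht_neg : ∀ v, t (-v) = - t v := by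
    intro v
    rw [htv, htv, hneg, hneg]
    noncomm_ring
  have ht_sub : ∀ u v, t (u - v) = t u - t v := by
    intro u v
    rw [sub_eq_add_neg, ht_add, ht_neg, sub_eq_add_neg]
  have ht_x' : t x' = -1 := by
    rw [htv, hxy', ← hNdef, zero_sub, neg_mul, mul_inv_cancel₀ hN]
  have ht_y' : t y' = 1 := by
    rw [htv, hy'y', hyx', sub_zero, mul_inv_cancel₀ hN]
  have ht_d : t d = -2 := by
    rw [hd, ht_sub, ht_x', ht_y']
    norm_num
  have hg_add : ∀ u v, g (u + v) = g u + g v := by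
    intro u v
    rw [hgv, hgv, hgv, ht_add, add_smul]
    abel
  have hg_smul : ∀ (c : K) v, g (c • v) = c • g v := by
    intro c v
    rw [hgv, hgv, ht_smul, smul_add, smul_smul]
  have ht_g : ∀ v, t (g v) = - t v := by
    intro v
    rw [hgv, ht_add, ht_smul, ht_d]
    noncomm_ring
  have hg_invol : ∀ v, g (g v) = v := by
    intro v
    rw [hgv (g v), ht_g, hgv v, neg_smul]
    abel
  have ht_0 : t 0 = 0 := by
    rw [htv, hf0, hf0, sub_zero, zero_mul]
  have hg_0 : g 0 = 0 := by
    rw [hgv, ht_0, zero_smul, add_zero]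
  have hg_ne : ∀ v : V, v ≠ 0 → g v ≠ 0 := by
    intro v hv h
    exact hv (by rw [← hg_invol v, h, hg_0])
  have hgx' : g x' = y' := by
    rw [hgv, ht_x', hd, neg_smul, one_smul]
    abel
  have hgy' : g y' = x' := by
    rw [hgv, ht_y', hd, one_smul]
    abel
  have hgsum : g (x' + y') = x' + y' := by
    rw [hg_add, hgx', hgy']
    abel
  -- isometry
  have hfd_r : ∀ u, f u d = f u x' - f u y' := fun u => by rw [hd, hsubr]
  have hfd_l : ∀ v, f d v = f x' v - f y' v := fun v => by rw [hd, hsub]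
  have hfdd : f d d = N + N := by
    rw [hfd_l, hfd_r, hfd_r, hxy', hyx', hy'y', ← hNdef]
    noncomm_ring
  have hstarN : star N = N := by
    rw [hNdef]
    exact hherm x' x'
  have hstart : ∀ v, star (t v) = N⁻¹ * (f y' v - f x' v) := by
    intro v
    rw [htv, star_mul, star_sub, hherm, hherm, star_inv₀, hstarN]
  have h2 : ∀ z : K, (N + N) * (N⁻¹ * z) = z + z := by
    intro z
    rw [add_mul, ← mul_assoc, mul_inv_cancel₀ hN, one_mul]
  have hiso : ∀ u v, f (g u) (g v) = f u v := by
    intro u v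
    rw [hgv u, hgv v, hadd, haddr, haddr, hsmul, hsmul, hsmulr, hsmulr,
      hstart, htv, hfd_r, hfd_l, hfdd, h2]
    noncomm_ring
  -- line machinery
  have hgline : ∀ v : V, g '' lineOf K v = lineOf K (g v) := by
    intro v
    ext w
    constructor
    · rintro ⟨u, ⟨c, rfl⟩, rfl⟩
      exact ⟨c, (hg_smul c v).symm⟩
    · rintro ⟨c, rfl⟩
      exact ⟨c • v, ⟨c, rfl⟩, hg_smul c v⟩
  have hIsLine : ∀ L : {L : Set V // IsLine K L}, IsLine K (g '' L.1) := by
    rintro ⟨L, v, hv, rfl⟩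
    exact ⟨g v, hg_ne v hv, hgline v⟩
  set F : {L : Set V // IsLine K L} → {L : Set V // IsLine K L} :=
    fun L => ⟨g '' L.1, hIsLine L⟩ with hF
  have hFF : ∀ L, F (F L) = L := by
    intro L
    apply Subtype.ext
    show g '' (g '' L.1) = L.1
    rw [← Set.image_comp]
    have hid : g ∘ g = id := funext hg_invol
    rw [hid, Set.image_id]
  refine ⟨⟨F, F, hFF, hFF⟩, ?_, ?_, ?_, ?_⟩
  · intro L L'
    constructor
    · rintro h a ⟨u, hu, rfl⟩ b ⟨w, hw, rfl⟩
      rw [hiso]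
      exact h u hu w hw
    · intro h u hu w hw
      have h' := h (g u) ⟨u, hu, rfl⟩ (g w) ⟨w, hw, rfl⟩
      rwa [hiso] at h'
  · intro L hL
    show g '' L.1 = lineOf K y
    obtain ⟨cx, hcx⟩ := hx'
    have hcx0 : cx ≠ 0 := fun h => hx'0 (by rw [h] at hcx; simpa using hcx.symm)
    obtain ⟨cy, hcy⟩ := hy'
    have hcy0 : cy ≠ 0 := fun h => hy'0 (by rw [h] at hcy; simpa using hcy.symm)
    have hlx : lineOf K x = lineOf K x' := by
      rw [← hcx]
      exact (lineOf_smul cx x hcx0).symm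
    have hly : lineOf K y = lineOf K y' := by
      rw [← hcy]
      exact (lineOf_smul cy y hcy0).symm
    rw [hL, hlx, hgline, hgx', hly]
  · intro L hL
    show g '' L.1 = lineOf K x
    obtain ⟨cx, hcx⟩ := hx'
    have hcx0 : cx ≠ 0 := fun h => hx'0 (by rw [h] at hcx; simpa using hcx.symm)
    obtain ⟨cy, hcy⟩ := hy'
    have hcy0 : cy ≠ 0 := fun h => hy'0 (by rw [h] at hcy; simpa using hcy.symm)
    have hlx : lineOf K x = lineOf K x' := by
      rw [← hcx]
      exact (lineOf_smul cx x hcx0).symm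
    have hly : lineOf K y = lineOf K y' := by
      rw [← hcy]
      exact (lineOf_smul cy y hcy0).symm
    rw [hL, hly, hgline, hgy', hlx]
  · intro L hL
    apply Subtype.ext
    show g '' L.1 = L.1
    rw [hL, hgline, hgsum]
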